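/- arXiv:1612.01290 — 8 statements merged into one kernel-verified Lean document; each statement's English description precedes it below -/
import Mathlib

section
/- Let s, c ∈ ℂ with s² + c² = 1. Then 2(s² - c² + i·s·c)⁴ - (2i·s·c + s²)⁴ - (2i·s·c - c²)⁴ = 1 (Gross's example for n = 4, stated as a polynomial identity). -/
theorem gross_example (s c : ℂ) (h : s ^ 2 + c ^ 2 = 1) :
    2 * (s ^ 2 - c ^ 2 + Complex.I * s * c) ^ 4
    - (2 * Complex.I * s * c + s ^ 2) ^ 4
    - (2 * Complex.I * s * c - c ^ 2) ^ 4 = 1 := by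
  linear_combination ((-12)*s^2*c^6 + 6*s^4*c^4 + (-12)*s^6*c^2 + 24*Complex.I*s^3*c^5
      + (-24)*Complex.I*s^5*c^3 + (-30)*Complex.I^2*s^4*c^4) * Complex.I_sq
    + (1 + c^2 + c^4 + c^6 + s^2 + 2*s^2*c^2 + 3*s^2*c^4 + s^4 + 3*s^4*c^2 + s^6) * h
end

section
/- Let n ≥ 1 be a natural number and let ζ ∈ ℂ satisfy ζⁿ = -1. For any function α : ℂ → ℂ, the functions f = 8^{-1/4}(e^{3α} + e^{-α}), g = (-8)^{-1/4}(e^{3α} - e^{-α}), h = ζ·e^{(8/n)α} satisfy f⁴ + g⁴ + hⁿ = 1 pointwise on ℂ. -/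
theorem modified_green_example (n : ℕ) (hn : 1 ≤ n) (ζ : ℂ) (hζ : ζ ^ n = -1)
    (α : ℂ → ℂ) (c₁ c₂ : ℂ) (h₁ : c₁ ^ 4 = 1 / 8) (h₂ : c₂ ^ 4 = -(1 / 8)) :
    ∀ z : ℂ,
      (c₁ * (Complex.exp (3 * α z) + Complex.exp (-α z))) ^ 4
      + (c₂ * (Complex.exp (3 * α z) - Complex.exp (-α z))) ^ 4
      + (ζ * Complex.exp ((8 / n : ℂ) * α z)) ^ n = 1 := by
  intro z
  have hn0 : (n : ℂ) ≠ 0 := Nat.cast_ne_zero.mpr (by omega)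
  have hu : Complex.exp (α z) ≠ 0 := Complex.exp_ne_zero _
  set u := Complex.exp (α z) with hu_def
  have e3 : Complex.exp (3 * α z) = u ^ 3 := by
    rw [hu_def, ← Complex.exp_nat_mul]; norm_num
  have em : Complex.exp (-α z) = u⁻¹ := by
    rw [hu_def, ← Complex.exp_neg]
  have en : Complex.exp ((8 / n : ℂ) * α z) ^ n = u ^ 8 := by
    rw [← Complex.exp_nat_mul, hu_def, ← Complex.exp_nat_mul]
    congr 1
    field_simp
    push_cast; ring
  rw [e3, em, mul_pow, mul_pow, mul_pow, hζ, en, h₁, h₂]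
  field_simp
  ring
end

section
/- Let n ≥ 2 and let f, g, h : U → ℂ be holomorphic and nonvanishing on an open set U ⊆ ℂ with fⁿ + gⁿ + hⁿ = 1 on U. Then (g'·D²h - h'·D²g)/f^{n-1} = (h'·D²f - f'·D²h)/g^{n-1} = (f'·D²g - g'·D²f)/h^{n-1} on U, where D²F := F'' + (n-1)·(F')²/F. -/
theorem cramer_jet_differential (n : ℕ) (hn : 2 ≤ n) (U : Set ℂ) (hU : IsOpen U)
    (f g h : ℂ → ℂ)
    (hf : DifferentiableOn ℂ f U) (hg : DifferentiableOn ℂ g U)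
    (hh : DifferentiableOn ℂ h U)
    (hnz : ∀ z ∈ U, f z ≠ 0 ∧ g z ≠ 0 ∧ h z ≠ 0)
    (heq : ∀ z ∈ U, f z ^ n + g z ^ n + h z ^ n = 1) :
    ∀ z ∈ U,
      (deriv g z * (deriv (deriv h) z + (n - 1 : ℂ) * (deriv h z) ^ 2 / h z)
        - deriv h z * (deriv (deriv g) z + (n - 1 : ℂ) * (deriv g z) ^ 2 / g z))
        / f z ^ (n - 1)
      = (deriv h z * (deriv (deriv f) z + (n - 1 : ℂ) * (deriv f z) ^ 2 / f z)
        - deriv f z * (deriv (deriv h) z + (n - 1 : ℂ) * (deriv h z) ^ 2 / h z))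
        / g z ^ (n - 1)
      ∧
      (deriv h z * (deriv (deriv f) z + (n - 1 : ℂ) * (deriv f z) ^ 2 / f z)
        - deriv f z * (deriv (deriv h) z + (n - 1 : ℂ) * (deriv h z) ^ 2 / h z))
        / g z ^ (n - 1)
      = (deriv f z * (deriv (deriv g) z + (n - 1 : ℂ) * (deriv g z) ^ 2 / g z)
        - deriv g z * (deriv (deriv f) z + (n - 1 : ℂ) * (deriv f z) ^ 2 / f z))
        / h z ^ (n - 1) := by
  obtain ⟨m, rfl⟩ : ∃ m, n = m + 2 := ⟨n - 2, by omega⟩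
  have hfa : AnalyticOnNhd ℂ f U := hf.analyticOnNhd hU
  have hga : AnalyticOnNhd ℂ g U := hg.analyticOnNhd hU
  have hha : AnalyticOnNhd ℂ h U := hh.analyticOnNhd hU
  have hidx : m + 2 - 1 = m + 1 := by omega
  have hidx2 : m + 1 - 1 = m := by omega
  have hne : ((m + 2 : ℕ) : ℂ) ≠ 0 := Nat.cast_ne_zero.mpr (by omega)
  -- first jet relation at every point of U
  have eq1 : ∀ z ∈ U,
      f z ^ (m+1) * deriv f z + g z ^ (m+1) * deriv g z + h z ^ (m+1) * deriv h z = 0 := by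
    intro z hz
    have hfz : DifferentiableAt ℂ f z := (hfa z hz).differentiableAt
    have hgz : DifferentiableAt ℂ g z := (hga z hz).differentiableAt
    have hhz : DifferentiableAt ℂ h z := (hha z hz).differentiableAt
    have Hd : HasDerivAt (fun w => f w ^ (m+2) + g w ^ (m+2) + h w ^ (m+2))
        (((m+2 : ℕ) : ℂ) * f z ^ (m + 2 - 1) * deriv f z +
          ((m+2 : ℕ) : ℂ) * g z ^ (m + 2 - 1) * deriv g z +
            ((m+2 : ℕ) : ℂ) * h z ^ (m + 2 - 1) * deriv h z) z :=
      ((hfz.hasDerivAt.pow _).add (hgz.hasDerivAt.pow _)).add (hhz.hasDerivAt.pow _)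
    have h0 : deriv (fun w => f w ^ (m+2) + g w ^ (m+2) + h w ^ (m+2)) z = 0 := by
      have hE : (fun w => f w ^ (m+2) + g w ^ (m+2) + h w ^ (m+2)) =ᶠ[nhds z]
          fun _ => (1 : ℂ) := Filter.eventually_of_mem (hU.mem_nhds hz) heq
      rw [hE.deriv_eq, deriv_const]
    have hval := Hd.deriv
    rw [h0, hidx] at hval
    have hmul : ((m + 2 : ℕ) : ℂ) *
        (f z ^ (m+1) * deriv f z + g z ^ (m+1) * deriv g z + h z ^ (m+1) * deriv h z) = 0 := by
      linear_combination -hval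
    exact (mul_eq_zero.mp hmul).resolve_left hne
  intro z hz
  obtain ⟨hF0, hG0, hH0⟩ := hnz z hz
  have hfz : DifferentiableAt ℂ f z := (hfa z hz).differentiableAt
  have hgz : DifferentiableAt ℂ g z := (hga z hz).differentiableAt
  have hhz : DifferentiableAt ℂ h z := (hha z hz).differentiableAt
  have hdf : HasDerivAt (deriv f) (deriv (deriv f) z) z := (hfa.deriv z hz).differentiableAt.hasDerivAt
  have hdg : HasDerivAt (deriv g) (deriv (deriv g) z) z := (hga.deriv z hz).differentiableAt.hasDerivAt
  have hdh : HasDerivAt (deriv h) (deriv (deriv h) z) z := (hha.deriv z hz).differentiableAt.hasDerivAt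
  -- second jet relation (polynomial form) at z
  have Hd2 : HasDerivAt
      (fun w => f w ^ (m+1) * deriv f w + g w ^ (m+1) * deriv g w + h w ^ (m+1) * deriv h w)
      ((((m+1 : ℕ) : ℂ) * f z ^ (m + 1 - 1) * deriv f z * deriv f z +
          f z ^ (m+1) * deriv (deriv f) z) +
        (((m+1 : ℕ) : ℂ) * g z ^ (m + 1 - 1) * deriv g z * deriv g z +
          g z ^ (m+1) * deriv (deriv g) z) +
        (((m+1 : ℕ) : ℂ) * h z ^ (m + 1 - 1) * deriv h z * deriv h z +
          h z ^ (m+1) * deriv (deriv h) z)) z :=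
    (((hfz.hasDerivAt.pow _).mul hdf).add
      ((hgz.hasDerivAt.pow _).mul hdg)).add ((hhz.hasDerivAt.pow _).mul hdh)
  have h02 : deriv (fun w => f w ^ (m+1) * deriv f w + g w ^ (m+1) * deriv g w +
      h w ^ (m+1) * deriv h w) z = 0 := by
    have hE : (fun w => f w ^ (m+1) * deriv f w + g w ^ (m+1) * deriv g w +
        h w ^ (m+1) * deriv h w) =ᶠ[nhds z] fun _ => (0 : ℂ) :=
      Filter.eventually_of_mem (hU.mem_nhds hz) eq1
    rw [hE.deriv_eq, deriv_const]
  have eq2pol := Hd2.deriv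
  rw [h02, hidx2] at eq2pol
  -- divisions form of eq2
  have key : ∀ x x1 x2 : ℂ, x ≠ 0 →
      x ^ (m+1) * (x2 + ((m : ℂ) + 1) * x1 ^ 2 / x) =
        x ^ (m+1) * x2 + ((m : ℂ) + 1) * x ^ m * x1 ^ 2 := by
    intro x x1 x2 hx
    rw [pow_succ]
    field_simp
  have eq2d : f z ^ (m+1) * (deriv (deriv f) z + ((m : ℂ) + 1) * (deriv f z) ^ 2 / f z) +
      g z ^ (m+1) * (deriv (deriv g) z + ((m : ℂ) + 1) * (deriv g z) ^ 2 / g z) +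
      h z ^ (m+1) * (deriv (deriv h) z + ((m : ℂ) + 1) * (deriv h z) ^ 2 / h z) = 0 := by
    rw [key _ _ _ hF0, key _ _ _ hG0, key _ _ _ hH0]
    push_cast at eq2pol ⊢
    linear_combination -eq2pol
  have eq1z := eq1 z hz
  have hc : ((m + 2 : ℕ) : ℂ) - 1 = (m : ℂ) + 1 := by push_cast; ring
  rw [hidx, hc]
  constructor
  · rw [div_eq_div_iff (pow_ne_zero _ hF0) (pow_ne_zero _ hG0)]
    linear_combination (deriv (deriv h) z + ((m : ℂ) + 1) * (deriv h z) ^ 2 / h z) * eq1z -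
      deriv h z * eq2d
  · rw [div_eq_div_iff (pow_ne_zero _ hG0) (pow_ne_zero _ hH0)]
    linear_combination (deriv (deriv f) z + ((m : ℂ) + 1) * (deriv f z) ^ 2 / f z) * eq1z -
      deriv f z * eq2d
end

section
/- Let n ≥ 2 and let f, g, h : U → ℂ be holomorphic and nonvanishing on an open set U ⊆ ℂ with fⁿ + gⁿ + hⁿ = 1. Then the common value Φ := (g'·D²h - h'·D²g)/f^{n-1} equals the 3×3 determinant det[[f, g, h], [f', g', h'], [D²f, D²g, D²h]], where D²F := F'' + (n-1)·(F')²/F. -/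
open Filter Topology

theorem phi_determinant (n : ℕ) (hn : 2 ≤ n) (U : Set ℂ) (hU : IsOpen U)
    (f g h : ℂ → ℂ)
    (hf : DifferentiableOn ℂ f U) (hg : DifferentiableOn ℂ g U)
    (hh : DifferentiableOn ℂ h U)
    (hnz : ∀ z ∈ U, f z ≠ 0 ∧ g z ≠ 0 ∧ h z ≠ 0)
    (heq : ∀ z ∈ U, f z ^ n + g z ^ n + h z ^ n = 1) :
    ∀ z ∈ U,
      (deriv g z * (deriv (deriv h) z + (n - 1 : ℂ) * (deriv h z) ^ 2 / h z)
        - deriv h z * (deriv (deriv g) z + (n - 1 : ℂ) * (deriv g z) ^ 2 / g z))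
        / f z ^ (n - 1)
      = Matrix.det
          !![f z, g z, h z;
             deriv f z, deriv g z, deriv h z;
             deriv (deriv f) z + (n - 1 : ℂ) * (deriv f z) ^ 2 / f z,
               deriv (deriv g) z + (n - 1 : ℂ) * (deriv g z) ^ 2 / g z,
               deriv (deriv h) z + (n - 1 : ℂ) * (deriv h z) ^ 2 / h z] := by
  have hfa : AnalyticOnNhd ℂ f U := hf.analyticOnNhd hU
  have hga : AnalyticOnNhd ℂ g U := hg.analyticOnNhd hU
  have hha : AnalyticOnNhd ℂ h U := hh.analyticOnNhd hU
  obtain ⟨m, rfl⟩ : ∃ m, n = m + 2 := ⟨n - 2, by omega⟩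
  have hfd : ∀ w ∈ U, HasDerivAt f (deriv f w) w := fun w hw =>
    (hf.differentiableAt (hU.mem_nhds hw)).hasDerivAt
  have hgd : ∀ w ∈ U, HasDerivAt g (deriv g w) w := fun w hw =>
    (hg.differentiableAt (hU.mem_nhds hw)).hasDerivAt
  have hhd : ∀ w ∈ U, HasDerivAt h (deriv h w) w := fun w hw =>
    (hh.differentiableAt (hU.mem_nhds hw)).hasDerivAt
  -- first derivative relation
  have rel2 : ∀ w ∈ U,
      f w ^ (m + 1) * deriv f w + g w ^ (m + 1) * deriv g w
        + h w ^ (m + 1) * deriv h w = 0 := by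
    intro w hw
    have h1 : HasDerivAt (fun w => f w ^ (m + 2) + g w ^ (m + 2) + h w ^ (m + 2))
        (((↑(m + 2) : ℂ) * f w ^ (m + 2 - 1) * deriv f w
          + (↑(m + 2) : ℂ) * g w ^ (m + 2 - 1) * deriv g w)
          + (↑(m + 2) : ℂ) * h w ^ (m + 2 - 1) * deriv h w) w :=
      (((hfd w hw).pow (m + 2)).add ((hgd w hw).pow (m + 2))).add ((hhd w hw).pow (m + 2))
    have h0 : HasDerivAt (fun w => f w ^ (m + 2) + g w ^ (m + 2) + h w ^ (m + 2)) 0 w :=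
      (hasDerivAt_const w (1 : ℂ)).congr_of_eventuallyEq
        (Filter.eventually_of_mem (hU.mem_nhds hw) heq)
    have h2 := h1.unique h0
    rw [show m + 2 - 1 = m + 1 from rfl] at h2
    have hm2 : ((m : ℂ) + 2) ≠ 0 := by
      have : (0:ℝ) < (m:ℝ) + 2 := by positivity
      intro hc
      exact_mod_cast this.ne' (by exact_mod_cast congrArg Complex.re hc)
    push_cast at h2
    have h3 : ((m : ℂ) + 2) * (f w ^ (m + 1) * deriv f w + g w ^ (m + 1) * deriv g w
        + h w ^ (m + 1) * deriv h w) = 0 := by linear_combination h2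
    exact (mul_eq_zero.mp h3).resolve_left hm2
  intro z hz
  obtain ⟨hfz, hgz, hhz⟩ := hnz z hz
  -- second derivative relation at z
  have rel3 :
      ((m : ℂ) + 1) * f z ^ m * deriv f z ^ 2 + f z ^ (m + 1) * deriv (deriv f) z
        + (((m : ℂ) + 1) * g z ^ m * deriv g z ^ 2 + g z ^ (m + 1) * deriv (deriv g) z)
        + (((m : ℂ) + 1) * h z ^ m * deriv h z ^ 2 + h z ^ (m + 1) * deriv (deriv h) z) = 0 := by
    have hfd2 : HasDerivAt (deriv f) (deriv (deriv f) z) z :=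
      ((hfa.deriv z hz).differentiableAt).hasDerivAt
    have hgd2 : HasDerivAt (deriv g) (deriv (deriv g) z) z :=
      ((hga.deriv z hz).differentiableAt).hasDerivAt
    have hhd2 : HasDerivAt (deriv h) (deriv (deriv h) z) z :=
      ((hha.deriv z hz).differentiableAt).hasDerivAt
    have hF : HasDerivAt (fun w => f w ^ (m + 1) * deriv f w)
        (((↑(m + 1) : ℂ) * f z ^ (m + 1 - 1) * deriv f z) * deriv f z
          + f z ^ (m + 1) * deriv (deriv f) z) z :=
      (((hfd z hz).pow (m + 1)).mul hfd2)
    have hG : HasDerivAt (fun w => g w ^ (m + 1) * deriv g w)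
        (((↑(m + 1) : ℂ) * g z ^ (m + 1 - 1) * deriv g z) * deriv g z
          + g z ^ (m + 1) * deriv (deriv g) z) z :=
      (((hgd z hz).pow (m + 1)).mul hgd2)
    have hH : HasDerivAt (fun w => h w ^ (m + 1) * deriv h w)
        (((↑(m + 1) : ℂ) * h z ^ (m + 1 - 1) * deriv h z) * deriv h z
          + h z ^ (m + 1) * deriv (deriv h) z) z :=
      (((hhd z hz).pow (m + 1)).mul hhd2)
    have h1 := ((hF.add hG).add hH)
    have h0 : HasDerivAt (fun w => f w ^ (m + 1) * deriv f w + g w ^ (m + 1) * deriv g w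
        + h w ^ (m + 1) * deriv h w) 0 z :=
      (hasDerivAt_const z (0 : ℂ)).congr_of_eventuallyEq
        (Filter.eventually_of_mem (hU.mem_nhds hz) rel2)
    have h2 := h1.unique h0
    rw [show m + 1 - 1 = m from rfl] at h2
    push_cast at h2
    linear_combination h2
  have r1 : f z ^ (m + 1) * f z + g z ^ (m + 1) * g z + h z ^ (m + 1) * h z = 1 := by
    have := heq z hz
    linear_combination this - (pow_succ (f z) (m+1)) - (pow_succ (g z) (m+1))
      - (pow_succ (h z) (m+1))
  have r2 := rel2 z hz
  -- packaged second derivative relation with the D² form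
  have r3 : f z ^ (m + 1) * (deriv (deriv f) z + ((m : ℂ) + 1) * deriv f z ^ 2 / f z)
      + g z ^ (m + 1) * (deriv (deriv g) z + ((m : ℂ) + 1) * deriv g z ^ 2 / g z)
      + h z ^ (m + 1) * (deriv (deriv h) z + ((m : ℂ) + 1) * deriv h z ^ 2 / h z) = 0 := by
    have hfp : f z ^ (m + 1) = f z ^ m * f z := pow_succ (f z) m
    have hgp : g z ^ (m + 1) = g z ^ m * g z := pow_succ (g z) m
    have hhp : h z ^ (m + 1) = h z ^ m * h z := pow_succ (h z) m
    field_simp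
    linear_combination (f z * g z * h z) * rel3
      + ((((m:ℂ)+1) * deriv f z ^ 2 * g z * h z) * hfp
        + (((m:ℂ)+1) * deriv g z ^ 2 * f z * h z) * hgp
        + (((m:ℂ)+1) * deriv h z ^ 2 * f z * g z) * hhp)
  have hx : f z ^ (m + 1) ≠ 0 := pow_ne_zero _ hfz
  have hcast : ((m : ℂ) + 2 - 1) = (m : ℂ) + 1 := by ring
  simp only [Matrix.det_fin_three, Matrix.cons_val', Matrix.cons_val_zero, Matrix.cons_val_one,
    Matrix.head_cons, Matrix.empty_val', Matrix.cons_val_fin_one, Matrix.head_fin_const,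
    Matrix.cons_val_two, Matrix.tail_cons, Matrix.of_apply, Matrix.cons_val_succ]
  push_cast [hcast]
  rw [div_eq_iff hx]
  linear_combination
    - (deriv g z * (deriv (deriv h) z + ((m:ℂ)+1) * deriv h z ^ 2 / h z)
      - deriv h z * (deriv (deriv g) z + ((m:ℂ)+1) * deriv g z ^ 2 / g z)) * r1
    + (g z * (deriv (deriv h) z + ((m:ℂ)+1) * deriv h z ^ 2 / h z)
      - h z * (deriv (deriv g) z + ((m:ℂ)+1) * deriv g z ^ 2 / g z)) * r2
    - (g z * deriv h z - h z * deriv g z) * r3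
end

section
/- Let n ≥ 2, let U ⊆ ℂ be open and connected, and let f, g : U → ℂ be holomorphic and nonvanishing with f' and g' nonvanishing on U. Suppose f'·(g'' + (n-1)(g')²/g) = g'·(f'' + (n-1)(f')²/f) on U. Then there exist constants k₁, k₂ ∈ ℂ with gⁿ = k₁·fⁿ + k₂ on U. -/
/-- A differentiable function with zero derivative on an open preconnected set is constant. -/
lemma const_of_deriv_eq_zero_aux {U : Set ℂ} (hU : IsOpen U) (hUc : IsPreconnected U)
    {h : ℂ → ℂ} (hd : DifferentiableOn ℂ h U) (h0 : ∀ z ∈ U, deriv h z = 0)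
    {x y : ℂ} (hx : x ∈ U) (hy : y ∈ U) : h x = h y := by
  -- local constancy
  have loc : ∀ z ∈ U, ∃ ε > 0, Metric.ball z ε ⊆ U ∧
      ∀ w ∈ Metric.ball z ε, h w = h z := by
    intro z hz
    obtain ⟨ε, hε, hball⟩ := Metric.isOpen_iff.mp hU z hz
    refine ⟨ε, hε, hball, fun w hw => ?_⟩
    refine (convex_ball z ε).is_const_of_fderivWithin_eq_zero (hd.mono hball)
      (fun v hv => ?_) hw (Metric.mem_ball_self hε)
    rw [fderivWithin_of_isOpen Metric.isOpen_ball hv]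
    apply ContinuousLinearMap.ext_ring
    rw [ContinuousLinearMap.zero_apply]
    exact h0 v (hball hv)
  by_contra hne
  set A : Set ℂ := {z | z ∈ U ∧ h z = h x} with hA
  set B : Set ℂ := {z | z ∈ U ∧ h z ≠ h x} with hB
  have hAopen : IsOpen A := by
    rw [isOpen_iff_mem_nhds]
    intro z hz
    obtain ⟨ε, hε, hballU, hconst⟩ := loc z hz.1
    refine Filter.mem_of_superset (Metric.ball_mem_nhds z hε) (fun w hw => ?_)
    exact ⟨hballU hw, by rw [hconst w hw, hz.2]⟩
  have hBopen : IsOpen B := by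
    rw [isOpen_iff_mem_nhds]
    intro z hz
    obtain ⟨ε, hε, hballU, hconst⟩ := loc z hz.1
    refine Filter.mem_of_superset (Metric.ball_mem_nhds z hε) (fun w hw => ?_)
    exact ⟨hballU hw, by rw [hconst w hw]; exact hz.2⟩
  have hcover : U ⊆ A ∪ B := fun z hz => by
    by_cases hzc : h z = h x
    · exact Or.inl ⟨hz, hzc⟩
    · exact Or.inr ⟨hz, hzc⟩
  obtain ⟨w, hwU, hwA, hwB⟩ := hUc A B hAopen hBopen hcover
    ⟨x, hx, hx, rfl⟩ ⟨y, hy, hy, fun hc => hne hc.symm⟩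
  exact hwB.2 hwA.2

theorem ode_integration_step (n : ℕ) (hn : 2 ≤ n) (U : Set ℂ) (hU : IsOpen U)
    (hUc : IsConnected U) (f g : ℂ → ℂ)
    (hf : DifferentiableOn ℂ f U) (hg : DifferentiableOn ℂ g U)
    (hf' : DifferentiableOn ℂ (deriv f) U) (hg' : DifferentiableOn ℂ (deriv g) U)
    (hfz : ∀ z ∈ U, f z ≠ 0) (hgz : ∀ z ∈ U, g z ≠ 0)
    (hfz' : ∀ z ∈ U, deriv f z ≠ 0) (hgz' : ∀ z ∈ U, deriv g z ≠ 0)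
    (heq : ∀ z ∈ U,
      deriv f z * (deriv (deriv g) z + (n - 1 : ℂ) * (deriv g z) ^ 2 / g z)
      = deriv g z * (deriv (deriv f) z + (n - 1 : ℂ) * (deriv f z) ^ 2 / f z)) :
    ∃ k₁ k₂ : ℂ, ∀ z ∈ U, g z ^ n = k₁ * f z ^ n + k₂ := by
  obtain ⟨m, rfl⟩ : ∃ m, n = m + 2 := ⟨n - 2, by omega⟩
  obtain ⟨z₀, hz₀⟩ := hUc.nonempty
  -- differentiability at points
  have hfa : ∀ z ∈ U, DifferentiableAt ℂ f z :=
    fun z hz => hf.differentiableAt (hU.mem_nhds hz)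
  have hga : ∀ z ∈ U, DifferentiableAt ℂ g z :=
    fun z hz => hg.differentiableAt (hU.mem_nhds hz)
  have hfa' : ∀ z ∈ U, DifferentiableAt ℂ (deriv f) z :=
    fun z hz => hf'.differentiableAt (hU.mem_nhds hz)
  have hga' : ∀ z ∈ U, DifferentiableAt ℂ (deriv g) z :=
    fun z hz => hg'.differentiableAt (hU.mem_nhds hz)
  set N : ℂ → ℂ := fun z => deriv g z * g z ^ (m + 1) with hN
  set D : ℂ → ℂ := fun z => deriv f z * f z ^ (m + 1) with hD
  have hNa : ∀ z ∈ U, DifferentiableAt ℂ N z :=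
    fun z hz => (hga' z hz).mul ((hga z hz).pow _)
  have hDa : ∀ z ∈ U, DifferentiableAt ℂ D z :=
    fun z hz => (hfa' z hz).mul ((hfa z hz).pow _)
  have hDne : ∀ z ∈ U, D z ≠ 0 :=
    fun z hz => mul_ne_zero (hfz' z hz) (pow_ne_zero _ (hfz z hz))
  have hNne : ∀ z ∈ U, N z ≠ 0 :=
    fun z hz => mul_ne_zero (hgz' z hz) (pow_ne_zero _ (hgz z hz))
  have hderivN : ∀ z ∈ U, deriv N z
      = deriv (deriv g) z * g z ^ (m + 1)
        + deriv g z * ((m + 1 : ℂ) * g z ^ m * deriv g z) := by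
    intro z hz
    rw [hN]
    rw [deriv_fun_mul (hga' z hz) ((hga z hz).fun_pow _), deriv_fun_pow (hga z hz) _]
    push_cast
    ring_nf
  have hderivD : ∀ z ∈ U, deriv D z
      = deriv (deriv f) z * f z ^ (m + 1)
        + deriv f z * ((m + 1 : ℂ) * f z ^ m * deriv f z) := by
    intro z hz
    rw [hD]
    rw [deriv_fun_mul (hfa' z hz) ((hfa z hz).fun_pow _), deriv_fun_pow (hfa z hz) _]
    push_cast
    ring_nf
  -- key identity: deriv N * D = N * deriv D on U
  have hkey : ∀ z ∈ U, deriv N z * D z = N z * deriv D z := by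
    intro z hz
    have h1 := heq z hz
    have hgz0 := hgz z hz
    have hfz0 := hfz z hz
    rw [hderivN z hz, hderivD z hz, hN, hD]
    push_cast at h1 ⊢
    field_simp at h1
    linear_combination (f z ^ m * g z ^ m) * h1
  -- derivative of the quotient N / D vanishes on U
  have hr0 : ∀ z ∈ U, deriv (fun w => N w / D w) z = 0 := by
    intro z hz
    rw [deriv_fun_div (hNa z hz) (hDa z hz) (hDne z hz), hkey z hz, sub_self, zero_div]
  have hrd : DifferentiableOn ℂ (fun w => N w / D w) U := by
    intro z hz
    exact (((hNa z hz).div (hDa z hz) (hDne z hz)).differentiableWithinAt)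
  set k₁ : ℂ := N z₀ / D z₀ with hk₁
  have hrconst : ∀ z ∈ U, N z / D z = k₁ := fun z hz =>
    const_of_deriv_eq_zero_aux hU hUc.isPreconnected hrd hr0 hz hz₀
  have hND : ∀ z ∈ U, N z = k₁ * D z := by
    intro z hz
    have h4 := hrconst z hz
    rw [div_eq_iff (hDne z hz)] at h4
    exact h4
  -- second integration: g ^ n - k₁ * f ^ n is constant
  set q : ℂ → ℂ := fun w => g w ^ (m + 2) - k₁ * f w ^ (m + 2) with hq
  have hqd : DifferentiableOn ℂ q U := by
    intro z hz
    exact (((hga z hz).pow _).sub (((hfa z hz).pow _).const_mul _)).differentiableWithinAt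
  have hq0 : ∀ z ∈ U, deriv q z = 0 := by
    intro z hz
    have h2 : deriv q z = (m + 2 : ℂ) * g z ^ (m + 1) * deriv g z
        - k₁ * ((m + 2 : ℂ) * f z ^ (m + 1) * deriv f z) := by
      rw [hq]
      rw [deriv_fun_sub ((hga z hz).fun_pow _) (((hfa z hz).fun_pow _).const_mul _),
        deriv_const_mul _ ((hfa z hz).fun_pow _), deriv_fun_pow (hga z hz) _,
        deriv_fun_pow (hfa z hz) _]
      push_cast
      ring
    rw [h2]
    have h3 := hND z hz
    rw [hN, hD] at h3
    simp only at h3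
    linear_combination ((m : ℂ) + 2) * h3
  refine ⟨k₁, q z₀, fun z hz => ?_⟩
  have hqc : q z = q z₀ := const_of_deriv_eq_zero_aux hU hUc.isPreconnected hqd hq0 hz hz₀
  simp only [hq] at hqc
  linear_combination hqc
end

section
/- Let n, m ≥ 2, let U ⊆ ℂ be open and connected, and let f, g : U → ℂ be holomorphic and nonvanishing with f', g' nonvanishing on U. Suppose f'·(g'' + (m-1)(g')²/g) = g'·(f'' + (n-1)(f')²/f) on U. Then there exist constants c₁, c₂ ∈ ℂ with gᵐ = c₁·fⁿ + c₂ on U. -/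
open Set Metric

lemma aux_const_of_deriv_zero (U : Set ℂ) (hU : IsOpen U) (hUc : IsPreconnected U)
    (h : ℂ → ℂ) (hd : ∀ z ∈ U, HasDerivAt h 0 z) {z₀ : ℂ} (hz₀ : z₀ ∈ U) :
    ∀ z ∈ U, h z = h z₀ := by
  -- local constancy
  have loc : ∀ z ∈ U, ∃ r > 0, ball z r ⊆ U ∧ ∀ w ∈ ball z r, h w = h z := by
    intro z hz
    obtain ⟨r, hr, hball⟩ := Metric.isOpen_iff.1 hU z hz
    refine ⟨r, hr, hball, fun w hw => ?_⟩
    have hconv : Convex ℝ (ball z r) := convex_ball z r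
    have hdiff : DifferentiableOn ℂ h (ball z r) := fun x hx =>
      ((hd x (hball hx)).differentiableAt).differentiableWithinAt
    have hz' : ∀ x ∈ ball z r, fderivWithin ℂ h (ball z r) x = 0 := by
      intro x hx
      rw [fderivWithin_of_isOpen isOpen_ball hx]
      have := (hd x (hball hx)).hasFDerivAt
      have h0 : (ContinuousLinearMap.toSpanSingleton ℂ (0 : ℂ)) = 0 := by
        ext; simp
      rw [h0] at this
      exact this.fderiv
    exact hconv.is_const_of_fderivWithin_eq_zero hdiff hz' hw (mem_ball_self hr)
  set u := {z | z ∈ U ∧ h z = h z₀} with hu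
  set v := {z | z ∈ U ∧ h z ≠ h z₀} with hv
  have hou : IsOpen u := by
    rw [Metric.isOpen_iff]
    intro z hz
    obtain ⟨r, hr, hbU, hc⟩ := loc z hz.1
    exact ⟨r, hr, fun w hw => ⟨hbU hw, (hc w hw).trans hz.2⟩⟩
  have hov : IsOpen v := by
    rw [Metric.isOpen_iff]
    intro z hz
    obtain ⟨r, hr, hbU, hc⟩ := loc z hz.1
    exact ⟨r, hr, fun w hw => ⟨hbU hw, (hc w hw).symm ▸ hz.2⟩⟩
  have hdisj : Disjoint u v := by
    rw [Set.disjoint_iff]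
    rintro z ⟨⟨_, h1⟩, ⟨_, h2⟩⟩
    exact (h2 h1).elim
  have hsub : U ⊆ u ∪ v := fun z hz => by
    by_cases hc : h z = h z₀
    · exact Or.inl ⟨hz, hc⟩
    · exact Or.inr ⟨hz, hc⟩
  have hne : (U ∩ u).Nonempty := ⟨z₀, hz₀, hz₀, rfl⟩
  have := hUc.subset_left_of_subset_union hou hov hdisj hsub hne
  exact fun z hz => (this hz).2


lemma aux_key (m' n' : ℕ) (a a' a'' b b' b'' : ℂ) (ha : a ≠ 0) (hb : b ≠ 0)
    (h : a' * (b'' + (↑(m' + 2) - 1) * b' ^ 2 / b) = b' * (a'' + (↑(n' + 2) - 1) * a' ^ 2 / a)) :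
    (((m' : ℂ) + 2) * (((m' : ℂ) + 1) * b ^ m' * b') * b' + ((m' : ℂ) + 2) * b ^ (m' + 1) * b'')
      * (((n' : ℂ) + 2) * a ^ (n' + 1) * a')
    - (((m' : ℂ) + 2) * b ^ (m' + 1) * b')
      * (((n' : ℂ) + 2) * (((n' : ℂ) + 1) * a ^ n' * a') * a' + ((n' : ℂ) + 2) * a ^ (n' + 1) * a'') = 0 := by
  field_simp at h
  push_cast at h
  linear_combination (((m':ℂ)+2) * ((n':ℂ)+2) * a ^ n' * b ^ m') * h

theorem generalized_ode_integration_step (n m : ℕ) (hn : 2 ≤ n) (hm : 2 ≤ m)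
    (U : Set ℂ) (hU : IsOpen U) (hUc : IsConnected U) (f g : ℂ → ℂ)
    (hf : DifferentiableOn ℂ f U) (hg : DifferentiableOn ℂ g U)
    (hf' : DifferentiableOn ℂ (deriv f) U) (hg' : DifferentiableOn ℂ (deriv g) U)
    (hfz : ∀ z ∈ U, f z ≠ 0) (hgz : ∀ z ∈ U, g z ≠ 0)
    (hfz' : ∀ z ∈ U, deriv f z ≠ 0) (hgz' : ∀ z ∈ U, deriv g z ≠ 0)
    (heq : ∀ z ∈ U,
      deriv f z * (deriv (deriv g) z + (m - 1 : ℂ) * (deriv g z) ^ 2 / g z)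
      = deriv g z * (deriv (deriv f) z + (n - 1 : ℂ) * (deriv f z) ^ 2 / f z)) :
    ∃ c₁ c₂ : ℂ, ∀ z ∈ U, g z ^ m = c₁ * f z ^ n + c₂ := by
  obtain ⟨n', rfl⟩ : ∃ k, n = k + 2 := ⟨n - 2, by omega⟩
  obtain ⟨m', rfl⟩ : ∃ k, m = k + 2 := ⟨m - 2, by omega⟩
  obtain ⟨z₀, hz₀⟩ := hUc.nonempty
  set N : ℂ → ℂ := fun z => ((m' : ℂ) + 2) * g z ^ (m' + 1) * deriv g z with hN
  set D : ℂ → ℂ := fun z => ((n' : ℂ) + 2) * f z ^ (n' + 1) * deriv f z with hD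
  set Q : ℂ → ℂ := fun z => N z / D z with hQ
  -- basic derivatives at points of U
  have hfd : ∀ z ∈ U, HasDerivAt f (deriv f z) z := fun z hz =>
    (hf.differentiableAt (hU.mem_nhds hz)).hasDerivAt
  have hgd : ∀ z ∈ U, HasDerivAt g (deriv g z) z := fun z hz =>
    (hg.differentiableAt (hU.mem_nhds hz)).hasDerivAt
  have hfd' : ∀ z ∈ U, HasDerivAt (deriv f) (deriv (deriv f) z) z := fun z hz =>
    (hf'.differentiableAt (hU.mem_nhds hz)).hasDerivAt
  have hgd' : ∀ z ∈ U, HasDerivAt (deriv g) (deriv (deriv g) z) z := fun z hz =>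
    (hg'.differentiableAt (hU.mem_nhds hz)).hasDerivAt
  have hDz : ∀ z ∈ U, D z ≠ 0 := by
    intro z hz
    simp only [hD]
    have hc : ((n' : ℂ) + 2) ≠ 0 := by
      have : ((n' + 2 : ℕ) : ℂ) ≠ 0 := Nat.cast_ne_zero.mpr (by omega)
      push_cast at this
      exact this
    exact mul_ne_zero (mul_ne_zero hc (pow_ne_zero _ (hfz z hz))) (hfz' z hz)
  have hNder : ∀ z ∈ U, HasDerivAt N
      (((m' : ℂ) + 2) * (((m' : ℂ) + 1) * g z ^ m' * deriv g z) * deriv g z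
        + ((m' : ℂ) + 2) * g z ^ (m' + 1) * deriv (deriv g) z) z := by
    intro z hz
    have h1 : HasDerivAt (fun w => ((m' : ℂ) + 2) * g w ^ (m' + 1))
        (((m' : ℂ) + 2) * (((m' : ℂ) + 1) * g z ^ m' * deriv g z)) z := by
      have h0 := ((hgd z hz).fun_pow (m' + 1)).const_mul ((m' : ℂ) + 2)
      refine h0.congr_deriv ?_
      push_cast
      ring
    have h2 := h1.fun_mul (hgd' z hz)
    convert h2 using 1 <;> ring
  have hDder : ∀ z ∈ U, HasDerivAt D
      (((n' : ℂ) + 2) * (((n' : ℂ) + 1) * f z ^ n' * deriv f z) * deriv f z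
        + ((n' : ℂ) + 2) * f z ^ (n' + 1) * deriv (deriv f) z) z := by
    intro z hz
    have h1 : HasDerivAt (fun w => ((n' : ℂ) + 2) * f w ^ (n' + 1))
        (((n' : ℂ) + 2) * (((n' : ℂ) + 1) * f z ^ n' * deriv f z)) z := by
      have h0 := ((hfd z hz).fun_pow (n' + 1)).const_mul ((n' : ℂ) + 2)
      refine h0.congr_deriv ?_
      push_cast
      ring
    have h2 := h1.fun_mul (hfd' z hz)
    convert h2 using 1 <;> ring
  -- Q has zero derivative
  have hQd : ∀ z ∈ U, HasDerivAt Q 0 z := by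
    intro z hz
    have key : (((m' : ℂ) + 2) * (((m' : ℂ) + 1) * g z ^ m' * deriv g z) * deriv g z
        + ((m' : ℂ) + 2) * g z ^ (m' + 1) * deriv (deriv g) z) * D z
        - N z * (((n' : ℂ) + 2) * (((n' : ℂ) + 1) * f z ^ n' * deriv f z) * deriv f z
        + ((n' : ℂ) + 2) * f z ^ (n' + 1) * deriv (deriv f) z) = 0 := by
      simp only [hN, hD]
      exact aux_key m' n' (f z) (deriv f z) (deriv (deriv f) z) (g z) (deriv g z)
        (deriv (deriv g) z) (hfz z hz) (hgz z hz) (heq z hz)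
    have := (hNder z hz).div (hDder z hz) (hDz z hz)
    have hz0 : (((m' : ℂ) + 2) * (((m' : ℂ) + 1) * g z ^ m' * deriv g z) * deriv g z
        + ((m' : ℂ) + 2) * g z ^ (m' + 1) * deriv (deriv g) z) * D z
        - N z * (((n' : ℂ) + 2) * (((n' : ℂ) + 1) * f z ^ n' * deriv f z) * deriv f z
        + ((n' : ℂ) + 2) * f z ^ (n' + 1) * deriv (deriv f) z) = 0 := key
    rw [hz0, zero_div] at this
    exact this
  -- Q is constant
  have hQconst := aux_const_of_deriv_zero U hU hUc.isPreconnected Q hQd hz₀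
  set c₁ : ℂ := Q z₀ with hc₁
  -- h := g^m - c₁ f^n has zero derivative
  set h : ℂ → ℂ := fun z => g z ^ (m' + 2) - c₁ * f z ^ (n' + 2) with hh
  have hhd : ∀ z ∈ U, HasDerivAt h 0 z := by
    intro z hz
    have h1 : HasDerivAt (fun w => g w ^ (m' + 2))
        (((m' : ℂ) + 2) * g z ^ (m' + 1) * deriv g z) z := by
      have := (hgd z hz).fun_pow (m' + 2)
      push_cast at this
      simpa using this
    have h2 : HasDerivAt (fun w => c₁ * f w ^ (n' + 2))
        (c₁ * (((n' : ℂ) + 2) * f z ^ (n' + 1) * deriv f z)) z := by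
      have := ((hfd z hz).fun_pow (n' + 2)).const_mul c₁
      push_cast at this
      simpa [mul_assoc] using this
    have h3 := h1.sub h2
    have hNc : N z = c₁ * D z := by
      have hq := hQconst z hz
      rw [hQ] at hq
      exact (div_eq_iff (hDz z hz)).1 hq
    have : ((m' : ℂ) + 2) * g z ^ (m' + 1) * deriv g z
        - c₁ * (((n' : ℂ) + 2) * f z ^ (n' + 1) * deriv f z) = 0 := by
      have := hNc
      simp only [hN, hD] at this
      linear_combination this
    rw [this] at h3
    exact h3
  have hhconst := aux_const_of_deriv_zero U hU hUc.isPreconnected h hhd hz₀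
  refine ⟨c₁, g z₀ ^ (m' + 2) - c₁ * f z₀ ^ (n' + 2), fun z hz => ?_⟩
  have := hhconst z hz
  simp only [hh] at this
  linear_combination this
end

section
/- Let n ≥ 2 and let f, g, h : U → ℂ be holomorphic on an open set U ⊆ ℂ with fⁿ + gⁿ + hⁿ = 1 and f nonvanishing and g nonvanishing on U. Then W(fⁿ, gⁿ, hⁿ) = n²·f^{n-1}·g^{n-1}·(f'·D²g - g'·D²f) on U, where D²F := F'' + (n-1)·(F')²/F and W denotes the 3×3 Wronskian determinant. -/
theorem wronskian_jet_identity (n : ℕ) (hn : 2 ≤ n) (U : Set ℂ) (hU : IsOpen U)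
    (f g h : ℂ → ℂ)
    (hf : DifferentiableOn ℂ f U) (hg : DifferentiableOn ℂ g U)
    (hh : DifferentiableOn ℂ h U)
    (hf' : DifferentiableOn ℂ (deriv f) U) (hg' : DifferentiableOn ℂ (deriv g) U)
    (hh' : DifferentiableOn ℂ (deriv h) U)
    (hfz : ∀ z ∈ U, f z ≠ 0) (hgz : ∀ z ∈ U, g z ≠ 0)
    (heq : ∀ z ∈ U, f z ^ n + g z ^ n + h z ^ n = 1) :
    ∀ z ∈ U,
      Matrix.det
        !![f z ^ n, g z ^ n, h z ^ n;
           deriv (fun w => f w ^ n) z, deriv (fun w => g w ^ n) z,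
             deriv (fun w => h w ^ n) z;
           deriv (deriv (fun w => f w ^ n)) z, deriv (deriv (fun w => g w ^ n)) z,
             deriv (deriv (fun w => h w ^ n)) z]
      = (n : ℂ) ^ 2 * f z ^ (n - 1) * g z ^ (n - 1)
        * (deriv f z * (deriv (deriv g) z + (n - 1 : ℂ) * (deriv g z) ^ 2 / g z)
          - deriv g z * (deriv (deriv f) z + (n - 1 : ℂ) * (deriv f z) ^ 2 / f z)) := by
  obtain ⟨k, rfl⟩ : ∃ k, n = k + 2 := ⟨n - 2, by omega⟩
  intro z hz
  set n := k + 2 with hnk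
  have hmem : U ∈ nhds z := hU.mem_nhds hz
  -- differentiability at points of U
  have Df : ∀ w ∈ U, DifferentiableAt ℂ f w := fun w hw => hf.differentiableAt (hU.mem_nhds hw)
  have Dg : ∀ w ∈ U, DifferentiableAt ℂ g w := fun w hw => hg.differentiableAt (hU.mem_nhds hw)
  have Dh : ∀ w ∈ U, DifferentiableAt ℂ h w := fun w hw => hh.differentiableAt (hU.mem_nhds hw)
  have Df' : DifferentiableAt ℂ (deriv f) z := hf'.differentiableAt hmem
  have Dg' : DifferentiableAt ℂ (deriv g) z := hg'.differentiableAt hmem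
  -- first derivative formulas (on all of U)
  have Hf1 : ∀ w ∈ U, deriv (fun w => f w ^ n) w = (n : ℂ) * f w ^ (n - 1) * deriv f w :=
    fun w hw => deriv_fun_pow (Df w hw) n
  have Hg1 : ∀ w ∈ U, deriv (fun w => g w ^ n) w = (n : ℂ) * g w ^ (n - 1) * deriv g w :=
    fun w hw => deriv_fun_pow (Dg w hw) n
  -- second derivative formula
  have second : ∀ (φ : ℂ → ℂ), DifferentiableAt ℂ (deriv φ) z → (∀ w ∈ U, DifferentiableAt ℂ φ w) →
      deriv (deriv (fun w => φ w ^ n)) z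
      = (n : ℂ) * (((n : ℂ) - 1) * φ z ^ k * deriv φ z ^ 2 + φ z ^ (n - 1) * deriv (deriv φ) z) := by
    intro φ hφ' hφ
    have hev : deriv (fun w => φ w ^ n) =ᶠ[nhds z] fun w => (n : ℂ) * φ w ^ (n - 1) * deriv φ w :=
      Filter.eventuallyEq_of_mem hmem (fun w hw => deriv_fun_pow (hφ w hw) n)
    rw [hev.deriv_eq]
    have h1 : DifferentiableAt ℂ (fun w => φ w ^ (n - 1)) z := (hφ z hz).pow _
    simp only [mul_assoc]
    rw [deriv_const_mul _ (h1.fun_mul hφ'), deriv_fun_mul h1 hφ', deriv_fun_pow (hφ z hz) (n - 1)]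
    have : n - 1 - 1 = k := by omega
    rw [this]
    have : ((n - 1 : ℕ) : ℂ) = (n : ℂ) - 1 := by push_cast [hnk]; ring
    rw [this]; ring
  have Hf2 := second f Df' Df
  have Hg2 := second g Dg' Dg
  -- h column via the Fermat relation
  have hev1 : (fun w => h w ^ n) =ᶠ[nhds z] fun w => 1 - f w ^ n - g w ^ n :=
    Filter.eventuallyEq_of_mem hmem (fun w hw => by
      have := heq w hw; ring_nf; linear_combination this)
  have Dfn : ∀ w ∈ U, DifferentiableAt ℂ (fun w => f w ^ n) w := fun w hw => (Df w hw).pow _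
  have Dgn : ∀ w ∈ U, DifferentiableAt ℂ (fun w => g w ^ n) w := fun w hw => (Dg w hw).pow _
  have Hh1 : ∀ w ∈ U, deriv (fun w => h w ^ n) w
      = -(deriv (fun w => f w ^ n) w) - deriv (fun w => g w ^ n) w := by
    intro w hw
    have hev : (fun w => h w ^ n) =ᶠ[nhds w] fun w => 1 - f w ^ n - g w ^ n :=
      Filter.eventuallyEq_of_mem (hU.mem_nhds hw) (fun v hv => by
        have := heq v hv; linear_combination this)
    rw [hev.deriv_eq, deriv_fun_sub ((differentiableAt_const _).fun_sub (Dfn w hw)) (Dgn w hw),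
      deriv_fun_sub (differentiableAt_const _) (Dfn w hw), deriv_const]
    ring
  -- differentiability of deriv (f^n) at z
  have DF1 : DifferentiableAt ℂ (deriv fun w => f w ^ n) z := by
    have hev : deriv (fun w => f w ^ n) =ᶠ[nhds z] fun w => (n : ℂ) * f w ^ (n - 1) * deriv f w :=
      Filter.eventuallyEq_of_mem hmem Hf1
    exact (((differentiableAt_const _).mul ((Df z hz).pow _)).mul Df').congr_of_eventuallyEq hev
  have DG1 : DifferentiableAt ℂ (deriv fun w => g w ^ n) z := by
    have hev : deriv (fun w => g w ^ n) =ᶠ[nhds z] fun w => (n : ℂ) * g w ^ (n - 1) * deriv g w :=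
      Filter.eventuallyEq_of_mem hmem Hg1
    exact (((differentiableAt_const _).mul ((Dg z hz).pow _)).mul Dg').congr_of_eventuallyEq hev
  have Hh2 : deriv (deriv fun w => h w ^ n) z
      = -(deriv (deriv fun w => f w ^ n) z) - deriv (deriv fun w => g w ^ n) z := by
    have hev : deriv (fun w => h w ^ n) =ᶠ[nhds z]
        fun w => -(deriv (fun w => f w ^ n) w) - deriv (fun w => g w ^ n) w :=
      Filter.eventuallyEq_of_mem hmem Hh1
    rw [hev.deriv_eq, deriv_fun_sub DF1.fun_neg DG1]
    simp
  have Hh0 : h z ^ n = 1 - f z ^ n - g z ^ n := by linear_combination heq z hz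
  -- now pure algebra
  rw [Matrix.det_fin_three]
  rw [Hh0, Hh1 z hz, Hh2, Hf1 z hz, Hg1 z hz, Hf2, Hg2]
  have hf0 := hfz z hz
  have hg0 := hgz z hz
  have hpow : ∀ x : ℂ, x ^ n = x ^ k * x * x := fun x => by rw [hnk]; ring
  have hpow1 : ∀ x : ℂ, x ^ (n - 1) = x ^ k * x := fun x => by
    have : n - 1 = k + 1 := by omega
    rw [this]; ring
  rw [hpow (f z), hpow (g z), hpow1 (f z), hpow1 (g z)]
  simp only [Matrix.of_apply, Matrix.cons_val', Matrix.cons_val_zero, Matrix.cons_val_one, Matrix.cons_val_two, Matrix.empty_val', Matrix.cons_val_fin_one, Matrix.vecHead, Matrix.vecTail, Matrix.cons_val_succ, Function.comp_apply]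
  field_simp
  ring
end

section
/- Let f, g : ℂ → ℂ be entire functions with f² + g² = 1 on ℂ. Then there exists an entire function α : ℂ → ℂ with f = cos ∘ α and g = sin ∘ α. -/
open Complex

/-- Every entire function has an entire primitive. -/
lemma exists_primitive (u : ℂ → ℂ) (hu : Differentiable ℂ u) :
    ∃ F : ℂ → ℂ, ∀ z : ℂ, HasDerivAt F (u z) z := by
  set c : ℕ → ℂ := fun n => ((n.factorial : ℂ))⁻¹ * iteratedDeriv n u 0 with hc
  refine ⟨fun z => ∑' n : ℕ, c n / (n + 1) * z ^ (n + 1), fun z₀ => ?_⟩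
  set R : ℝ := ‖z₀‖ + 1 with hR
  have hR1 : (1 : ℝ) ≤ R := by have := norm_nonneg z₀; linarith
  have hR0 : (0 : ℝ) < R := by linarith
  set S : ℝ := 2 * R with hS
  have hS0 : (0 : ℝ) < S := by positivity
  -- absolute summability of the Taylor coefficients at radius 2R
  have hsum2R : Summable (fun n : ℕ => c n * (S : ℂ) ^ n) := by
    have := Complex.hasSum_taylorSeries_of_entire hu 0 ((S : ℝ) : ℂ)
    refine this.summable.congr fun n => ?_
    simp only [hc, smul_eq_mul, sub_zero]
    ring
  obtain ⟨C, hC⟩ : ∃ C : ℝ, ∀ n : ℕ, ‖c n * (S : ℂ) ^ n‖ ≤ C := by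
    obtain ⟨C, hCb⟩ := hsum2R.tendsto_atTop_zero.norm.bddAbove_range
    exact ⟨C, fun n => hCb ⟨n, rfl⟩⟩
  have hbound : ∀ n : ℕ, ‖c n‖ * R ^ n ≤ C * (1 / 2) ^ n := by
    intro n
    have h1 : ‖c n * (S : ℂ) ^ n‖ = ‖c n‖ * S ^ n := by
      rw [norm_mul, norm_pow, Complex.norm_real, Real.norm_of_nonneg hS0.le]
    have h2 : ‖c n‖ * S ^ n ≤ C := h1 ▸ hC n
    have h3 : ‖c n‖ * R ^ n = (‖c n‖ * S ^ n) * (1 / 2) ^ n := by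
      have hpow : S ^ n * (1 / 2) ^ n = R ^ n := by
        rw [← mul_pow]
        congr 1
        rw [hS]; ring
      rw [← hpow]; ring
    rw [h3]
    exact mul_le_mul_of_nonneg_right h2 (by positivity)
  -- apply term-by-term differentiation on the ball of radius R
  have key := hasDerivAt_tsum_of_isPreconnected (F := ℂ)
    (u := fun n => C * (1 / 2) ^ n)
    (g := fun n z => c n / (n + 1) * z ^ (n + 1))
    (g' := fun n z => c n * z ^ n)
    (y₀ := (0 : ℂ)) (y := z₀) (t := Metric.ball (0 : ℂ) R)
    ((summable_geometric_of_lt_one (by norm_num) (by norm_num)).mul_left C)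
    Metric.isOpen_ball
    ((convex_ball (0 : ℂ) R).isPreconnected)
    (fun n y _ => by
      have h := (hasDerivAt_pow (n + 1) y).const_mul (c n / ((n : ℂ) + 1))
      have hne : ((n : ℂ) + 1) ≠ 0 := Nat.cast_add_one_ne_zero n
      convert h using 1
      case e'_4 => rfl
      push_cast
      field_simp)
    (fun n y hy => by
      have hyR : ‖y‖ ≤ R := by
        have := Metric.mem_ball.mp hy
        simp only [dist_zero_right] at this
        linarith
      calc ‖c n * y ^ n‖ = ‖c n‖ * ‖y‖ ^ n := by rw [norm_mul, norm_pow]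
        _ ≤ ‖c n‖ * R ^ n :=
          mul_le_mul_of_nonneg_left (pow_le_pow_left₀ (norm_nonneg _) hyR n) (norm_nonneg _)
        _ ≤ C * (1 / 2) ^ n := hbound n)
    (Metric.mem_ball_self hR0)
    (by
      have hzero : (fun n : ℕ => c n / (n + 1) * (0 : ℂ) ^ (n + 1)) = fun _ => 0 := by
        funext n; simp
      rw [hzero]; exact summable_zero)
    (by
      simp only [Metric.mem_ball, dist_zero_right]
      linarith)
  -- identify the derivative with u z₀
  have htaylor : ∑' n : ℕ, c n * z₀ ^ n = u z₀ := by
    have := Complex.taylorSeries_eq_of_entire' (c := 0) (z := z₀) hu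
    rw [← this]
    apply tsum_congr
    intro n
    simp only [hc, sub_zero, mul_assoc]
  rw [htaylor] at key
  exact key

/-- An entire nonvanishing function has an entire logarithm. -/
lemma exists_entire_log (h : ℂ → ℂ) (hd : Differentiable ℂ h) (hne : ∀ z, h z ≠ 0) :
    ∃ L : ℂ → ℂ, Differentiable ℂ L ∧ ∀ z, h z = Complex.exp (L z) := by
  have hderiv : Differentiable ℂ (deriv h) := by
    have := (analyticOnNhd_univ_iff_differentiable.mpr hd).deriv
    exact analyticOnNhd_univ_iff_differentiable.mp this
  have hu : Differentiable ℂ (fun z => deriv h z / h z) := hderiv.div hd hne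
  obtain ⟨F, hF⟩ := exists_primitive _ hu
  have hFd : Differentiable ℂ F := fun z => (hF z).differentiableAt
  have hconst : ∀ z, h z * Complex.exp (-F z) = h 0 * Complex.exp (-F 0) := by
    have hd2 : Differentiable ℂ (fun z => h z * Complex.exp (-F z)) :=
      hd.mul ((hFd.neg).cexp)
    have hz : ∀ z, deriv (fun z => h z * Complex.exp (-F z)) z = 0 := by
      intro z
      have h1 : HasDerivAt h (deriv h z) z := (hd z).hasDerivAt
      have h2 : HasDerivAt (fun z => Complex.exp (-F z))
          (-(deriv h z / h z) * Complex.exp (-F z)) z := by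
        have := ((hF z).neg).cexp
        convert this using 1
        case e'_5 => rfl
        case e'_8 => rfl
        simp only [Pi.neg_apply]
        ring
      rw [show (fun z => h z * Complex.exp (-F z)) = h * fun z => Complex.exp (-F z) from rfl,
        (h1.mul h2).deriv]
      field_simp [hne z]
      ring
    have := is_const_of_deriv_eq_zero hd2 hz
    intro z; exact this z 0
  set K : ℂ := h 0 * Complex.exp (-F 0) with hK
  have hKne : K ≠ 0 := mul_ne_zero (hne 0) (Complex.exp_ne_zero _)
  refine ⟨fun z => F z + Complex.log K, hFd.add_const _, fun z => ?_⟩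
  rw [Complex.exp_add, Complex.exp_log hKne, ← hconst z]
  rw [mul_comm (Complex.exp (F z)), mul_assoc, ← Complex.exp_add]
  simp

theorem fermat_n2_classification (f g : ℂ → ℂ)
    (hf : Differentiable ℂ f) (hg : Differentiable ℂ g)
    (heq : ∀ z : ℂ, f z ^ 2 + g z ^ 2 = 1) :
    ∃ α : ℂ → ℂ, Differentiable ℂ α ∧ f = Complex.cos ∘ α ∧ g = Complex.sin ∘ α := by
  set h : ℂ → ℂ := fun z => f z + Complex.I * g z with hh
  have hinv : ∀ z, h z * (f z - Complex.I * g z) = 1 := by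
    intro z
    simp only [hh]
    linear_combination heq z - g z ^ 2 * Complex.I_sq
  have hne : ∀ z, h z ≠ 0 := by
    intro z hz
    have := hinv z
    rw [hz, zero_mul] at this
    exact one_ne_zero this.symm
  have hdh : Differentiable ℂ h := hf.add (hg.const_mul _)
  obtain ⟨L, hLd, hL⟩ := exists_entire_log h hdh hne
  have e1 : ∀ z, Complex.exp (-Complex.I * L z * Complex.I) = h z := by
    intro z
    have harg : -Complex.I * L z * Complex.I = L z := by
      linear_combination -L z * Complex.I_sq
    rw [harg, ← hL z]
  have e2 : ∀ z, Complex.exp (-(-Complex.I * L z) * Complex.I) = f z - Complex.I * g z := by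
    intro z
    have harg : -(-Complex.I * L z) * Complex.I = -L z := by
      linear_combination L z * Complex.I_sq
    rw [harg, Complex.exp_neg, ← hL z]
    have h1 : (f z - Complex.I * g z) * h z = 1 := by linear_combination hinv z
    exact (eq_inv_of_mul_eq_one_left h1).symm
  refine ⟨fun z => -Complex.I * L z, hLd.const_mul _, ?_, ?_⟩
  · funext z
    simp only [Function.comp_apply, Complex.cos]
    rw [e1 z, e2 z]
    simp only [hh]
    ring
  · funext z
    simp only [Function.comp_apply, Complex.sin]
    rw [e1 z, e2 z]
    simp only [hh]
    linear_combination g z * Complex.I_sq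
end
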